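/- arXiv:2505.10498 — 5 statements merged into one kernel-verified Lean document; each statement's English description precedes it below -/
import Mathlib

section
/- Let γ ∈ (0,1) be real, M ≥ 1 an integer, and T ≥ 1 real, and for 0 ≤ m ≤ M set t_m := T^{(1−γ^m)/(1−γ^M)} (so t_0 = 1 and t_M = T). Then for every 1 ≤ m ≤ M one has t_m · (ln(t_{m−1})/t_{m−1})^γ ≤ T^{(1−γ)/(1−γ^M)} · (ln T)^γ. -/
/-- With `T ≥ 1` and `t m := T ^ ((1 - γ^m)/(1 - γ^M))`,
for every `1 ≤ m ≤ M` one has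
`t m * (ln (t (m-1)) / t (m-1)) ^ γ ≤ T ^ ((1 - γ)/(1 - γ^M)) * (ln T) ^ γ`. -/
theorem stmt_2 (γ T : ℝ) (hγ0 : 0 < γ) (hγ1 : γ < 1) (M : ℕ) (hM : 1 ≤ M)
    (hT : 1 ≤ T) (t : ℕ → ℝ)
    (ht : ∀ m : ℕ, m ≤ M → t m = T ^ ((1 - γ ^ m) / (1 - γ ^ M))) :
    ∀ m : ℕ, 1 ≤ m → m ≤ M →
      t m * (Real.log (t (m - 1)) / t (m - 1)) ^ γ ≤
        T ^ ((1 - γ) / (1 - γ ^ M)) * Real.log T ^ γ := by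
  intro m hm1 hmM
  have hT0 : (0 : ℝ) < T := lt_of_lt_of_le one_pos hT
  have hlT : 0 ≤ Real.log T := Real.log_nonneg hT
  have hD : 0 < 1 - γ ^ M := by
    have : γ ^ M < 1 := pow_lt_one₀ hγ0.le hγ1 (by omega)
    linarith
  set a : ℝ := (1 - γ ^ (m - 1)) / (1 - γ ^ M) with ha
  set b : ℝ := (1 - γ ^ m) / (1 - γ ^ M) with hb
  set c : ℝ := (1 - γ) / (1 - γ ^ M) with hc
  have ha0 : 0 ≤ a := by
    apply div_nonneg _ hD.le
    have : γ ^ (m - 1) ≤ 1 := pow_le_one₀ hγ0.le hγ1.le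
    linarith
  have ha1 : a ≤ 1 := by
    rw [div_le_one hD]
    have : γ ^ M ≤ γ ^ (m - 1) := pow_le_pow_of_le_one hγ0.le hγ1.le (by omega)
    linarith
  have hbca : b = c + a * γ := by
    rw [hb, hc, ha]
    have hγm : γ ^ m = γ ^ (m - 1) * γ := by
      rw [← pow_succ]; congr 1; omega
    field_simp
    ring_nf
    rw [hγm]; ring
  have htm : t m = T ^ b := ht m hmM
  have htm1 : t (m - 1) = T ^ a := ht (m - 1) (by omega)
  have hlog : Real.log (t (m - 1)) = a * Real.log T := by
    rw [htm1, Real.log_rpow hT0]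
  have hTa0 : 0 < T ^ a := Real.rpow_pos_of_pos hT0 a
  rw [htm, hlog, htm1, hbca, Real.rpow_add hT0,
    Real.div_rpow (mul_nonneg ha0 hlT) hTa0.le, ← Real.rpow_mul hT0.le]
  calc T ^ c * T ^ (a * γ) * ((a * Real.log T) ^ γ / T ^ (a * γ))
      = T ^ c * (a * Real.log T) ^ γ := by
        field_simp
    _ ≤ T ^ c * Real.log T ^ γ := by
        apply mul_le_mul_of_nonneg_left _ (Real.rpow_pos_of_pos hT0 c).le
        apply Real.rpow_le_rpow (mul_nonneg ha0 hlT) _ hγ0.le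
        nlinarith
end

section
/- Assume in addition d ≥ 2 and d > α + 1. Then for every ε ∈ (0, 1]: ∫_𝒳 g(z)^{−(d−1)}·1{g(z) > ε} dz ≤ (D·(d−1)/(c̲·(d−1−α)))·ε^{α+1−d}, where the integral is with respect to Lebesgue measure on ℝ^d. -/
open MeasureTheory

set_option maxHeartbeats 1000000 in
/-- Case `d > α + 1` of Lemma 8. Under the density lower bound
`p ≥ c̲` a.e. on `𝒳` (where `μ = p · Leb` is a probability measure with `μ(𝒳) = 1`)
and the margin condition `μ({0 < g ≤ δ}) ≤ D δ^α`, for every `ε ∈ (0,1]`: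
`∫_𝒳 g(z)^{-(d-1)} 1{g(z) > ε} dz ≤ (D(d-1)/(c̲(d-1-α))) ε^{α+1-d}`. -/
theorem stmt_11 (d : ℕ) (hd : 2 ≤ d) (c D α : ℝ) (hc : 0 < c) (hD : 0 < D)
    (hα0 : 0 < α) (hαd : α ≤ (d : ℝ)) (hdα : α + 1 < (d : ℝ))
    (𝒳 : Set (EuclideanSpace ℝ (Fin d))) (h𝒳 : MeasurableSet 𝒳)
    (μ : Measure (EuclideanSpace ℝ (Fin d))) [IsProbabilityMeasure μ]
    (hμ𝒳 : μ 𝒳 = 1)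
    (p : EuclideanSpace ℝ (Fin d) → ℝ) (hp_meas : Measurable p) (hp0 : ∀ x, 0 ≤ p x)
    (hμp : μ = volume.withDensity fun x => ENNReal.ofReal (p x))
    (hpc : ∀ᵐ x ∂volume, x ∈ 𝒳 → c ≤ p x)
    (g : EuclideanSpace ℝ (Fin d) → ℝ) (hg_meas : Measurable g) (hg0 : ∀ x, 0 ≤ g x)
    (hmargin : ∀ δ : ℝ, 0 < δ → μ {x | 0 < g x ∧ g x ≤ δ} ≤ ENNReal.ofReal (D * δ ^ α))
    (ε : ℝ) (hε0 : 0 < ε) (hε1 : ε ≤ 1) :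
    ∫ z in 𝒳, Set.indicator {z | ε < g z} (fun z => g z ^ (-((d : ℝ) - 1))) z ≤
      D * ((d : ℝ) - 1) / (c * ((d : ℝ) - 1 - α)) * ε ^ (α + 1 - (d : ℝ)) := by
  set m : ℝ := (d : ℝ) - 1 with hm
  have hd2 : (2 : ℝ) ≤ (d : ℝ) := by exact_mod_cast hd
  have hm0 : 0 < m := by simp only [hm]; linarith
  have hαm : α < m := by simp only [hm]; linarith
  set h : EuclideanSpace ℝ (Fin d) → ℝ :=
    fun z => Set.indicator {z | ε < g z} (fun z => g z ^ (-m)) z with hh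
  have hset : MeasurableSet {z | ε < g z} := measurableSet_lt measurable_const hg_meas
  have hh_meas : Measurable h := (hg_meas.pow_const _).indicator hset
  have hh_nonneg : ∀ z, 0 ≤ h z := fun z =>
    Set.indicator_nonneg (fun z _ => Real.rpow_nonneg (hg0 z) _) z
  set β : ℝ := α / m with hβ
  have hβ0 : 0 < β := by positivity
  have hβ1 : β < 1 := (div_lt_one hm0).2 hαm
  set T : ℝ := ε ^ (-m) with hT
  have hT0 : 0 < T := Real.rpow_pos_of_pos hε0 _
  -- superlevel set bound
  have key : ∀ t ∈ Set.Ioi (0:ℝ), μ {a | t < h a} ≤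
      Set.indicator (Set.Ioc 0 T) (fun t => ENNReal.ofReal (D * t ^ (-β))) t := by
    intro t ht
    simp only [Set.mem_Ioi] at ht
    by_cases hTt : t ≤ T
    · rw [Set.indicator_of_mem (by exact ⟨ht, hTt⟩)]
      have hsub : {a | t < h a} ⊆ {x | 0 < g x ∧ g x ≤ t ^ (-(1/m))} := by
        intro a ha
        simp only [Set.mem_setOf_eq] at ha ⊢
        have hmem : a ∈ {z | ε < g z} := by
          by_contra hcon
          rw [hh] at ha; simp only [Set.indicator_of_notMem hcon] at ha; linarith
        have hga : 0 < g a := lt_trans hε0 hmem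
        rw [hh] at ha; simp only [Set.indicator_of_mem hmem] at ha
        refine ⟨hga, ?_⟩
        calc g a = (g a ^ (-m)) ^ (-(1/m)) := by
              rw [← Real.rpow_mul hga.le,
                show -m * -(1/m) = 1 by field_simp, Real.rpow_one]
          _ ≤ t ^ (-(1/m)) := (Real.rpow_lt_rpow_of_neg ht ha (by
                rw [neg_lt, neg_zero]; positivity)).le
      calc μ {a | t < h a} ≤ μ {x | 0 < g x ∧ g x ≤ t ^ (-(1/m))} := measure_mono hsub
        _ ≤ ENNReal.ofReal (D * (t ^ (-(1/m))) ^ α) := hmargin _ (Real.rpow_pos_of_pos ht _)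
        _ = ENNReal.ofReal (D * t ^ (-β)) := by
            rw [← Real.rpow_mul ht.le, hβ]
            ring_nf
    · push_neg at hTt
      rw [Set.indicator_of_notMem (by
        simp only [Set.mem_Ioc, not_and, not_le]; intro; exact hTt)]
      have hempty : {a | t < h a} = ∅ := by
        ext a
        simp only [Set.mem_setOf_eq, Set.mem_empty_iff_false, iff_false, not_lt]
        by_cases hmem : a ∈ {z | ε < g z}
        · rw [hh]; simp only [Set.indicator_of_mem hmem]
          have hga : ε < g a := hmem
          have : g a ^ (-m) < ε ^ (-m) := Real.rpow_lt_rpow_of_neg hε0 hga (by linarith)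
          rw [hT] at hTt; linarith
        · rw [hh]; simp only [Set.indicator_of_notMem hmem]; linarith
      simp [hempty]
  -- value of the t-integral
  have tint : ∫⁻ t in Set.Ioi (0:ℝ), Set.indicator (Set.Ioc 0 T)
        (fun t => ENNReal.ofReal (D * t ^ (-β))) t
      = ENNReal.ofReal (D * (T ^ (1 - β) / (1 - β))) := by
    rw [lintegral_indicator measurableSet_Ioc, Measure.restrict_restrict measurableSet_Ioc,
      Set.inter_eq_self_of_subset_left Set.Ioc_subset_Ioi_self]
    have hint : IntegrableOn (fun t : ℝ => D * t ^ (-β)) (Set.Ioc 0 T) volume := by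
      have := (intervalIntegral.intervalIntegrable_rpow' (a := 0) (b := T)
        (by linarith : (-1:ℝ) < -β)).const_mul D
      rwa [intervalIntegrable_iff, Set.uIoc_of_le hT0.le] at this
    rw [← ofReal_integral_eq_lintegral_ofReal hint
      ((ae_restrict_iff' measurableSet_Ioc).2 (ae_of_all _ fun x hx => by
        have := hx.1; positivity))]
    congr 1
    rw [← intervalIntegral.integral_of_le hT0.le, intervalIntegral.integral_const_mul,
      integral_rpow (Or.inl (by linarith)), Real.zero_rpow (by linarith),
      show -β + 1 = 1 - β by ring]
    ring
  -- density comparison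
  have hcomp : ENNReal.ofReal c * ∫⁻ z in 𝒳, ENNReal.ofReal (h z) ∂volume
      ≤ ∫⁻ z in 𝒳, ENNReal.ofReal (h z) ∂μ := by
    rw [hμp, restrict_withDensity h𝒳,
      lintegral_withDensity_eq_lintegral_mul _ hp_meas.ennreal_ofReal hh_meas.ennreal_ofReal,
      ← lintegral_const_mul _ hh_meas.ennreal_ofReal]
    refine lintegral_mono_ae ?_
    filter_upwards [(ae_restrict_iff' h𝒳).2 hpc] with x hx
    exact mul_le_mul_left (ENNReal.ofReal_le_ofReal hx) _
  -- layer cake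
  have hlayer : ∫⁻ z, ENNReal.ofReal (h z) ∂μ = ∫⁻ t in Set.Ioi (0:ℝ), μ {a | t < h a} :=
    lintegral_eq_lintegral_meas_lt μ (ae_of_all _ hh_nonneg) hh_meas.aemeasurable
  -- put the chain together
  set R : ℝ := D * m / (c * (m - α)) * ε ^ (α + 1 - (d:ℝ)) with hR
  have hεpow : ε ^ (α + 1 - (d:ℝ)) = ε ^ (α - m) := by
    congr 1; simp only [hm]; ring
  have hTval : T ^ (1 - β) = ε ^ (α - m) := by
    clear_value m
    rw [hT, hβ, ← Real.rpow_mul hε0.le]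
    congr 1
    field_simp
    ring
  have hcR : c * R = D * (T ^ (1 - β) / (1 - β)) := by
    rw [hR, hεpow, hTval, hβ]
    clear_value m
    have hm' : m ≠ 0 := ne_of_gt hm0
    have hmα : m - α ≠ 0 := by intro hx; apply absurd hαm; rw [sub_eq_zero] at hx; simp [hx]
    field_simp
  have hA : ∫⁻ z in 𝒳, ENNReal.ofReal (h z) ∂volume ≤ ENNReal.ofReal R := by
    rw [← ENNReal.mul_le_mul_iff_right (a := ENNReal.ofReal c)
      (by simp [hc, hc.le]) ENNReal.ofReal_ne_top]
    calc ENNReal.ofReal c * ∫⁻ z in 𝒳, ENNReal.ofReal (h z) ∂volume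
        ≤ ∫⁻ z in 𝒳, ENNReal.ofReal (h z) ∂μ := hcomp
      _ ≤ ∫⁻ z, ENNReal.ofReal (h z) ∂μ := setLIntegral_le_lintegral _ _
      _ = ∫⁻ t in Set.Ioi (0:ℝ), μ {a | t < h a} := hlayer
      _ ≤ ∫⁻ t in Set.Ioi (0:ℝ), Set.indicator (Set.Ioc 0 T)
            (fun t => ENNReal.ofReal (D * t ^ (-β))) t := by
          refine lintegral_mono_ae ?_
          filter_upwards [ae_restrict_mem measurableSet_Ioi] with t ht
          exact key t ht
      _ = ENNReal.ofReal (D * (T ^ (1 - β) / (1 - β))) := tint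
      _ = ENNReal.ofReal c * ENNReal.ofReal R := by
          rw [← ENNReal.ofReal_mul hc.le, hcR]
  have hR0 : 0 ≤ R := by
    rw [hR]
    have h1 : (0:ℝ) < m - α := by linarith
    positivity
  have hEq : ∫ z in 𝒳, h z
      = (∫⁻ z in 𝒳, ENNReal.ofReal (h z) ∂volume).toReal :=
    integral_eq_lintegral_of_nonneg_ae (ae_of_all _ hh_nonneg)
      hh_meas.aestronglyMeasurable
  calc ∫ z in 𝒳, h z = (∫⁻ z in 𝒳, ENNReal.ofReal (h z) ∂volume).toReal := hEq
    _ ≤ R := ENNReal.toReal_le_of_le_ofReal hR0 hA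
    _ = D * m / (c * (m - α)) * ε ^ (α + 1 - (d:ℝ)) := rfl
end

section
/- Assume in addition d ≥ 2 and α = d − 1. Then for every ε ∈ (0, 1): ∫_𝒳 g(z)^{−(d−1)}·1{g(z) > ε} dz ≤ (1/c̲)·(1 + D·(d−1)·ln(1/ε)), where the integral is with respect to Lebesgue measure on ℝ^d. -/
open MeasureTheory
open scoped ENNReal

/-- Case `α = d - 1` of Lemma 8. Under the density lower bound
`p ≥ c̲` a.e. on `𝒳` (where `μ = p · Leb` is a probability measure with `μ(𝒳) = 1`)
and the margin condition `μ({0 < g ≤ δ}) ≤ D δ^α`, for every `ε ∈ (0,1)`: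
`∫_𝒳 g(z)^{-(d-1)} 1{g(z) > ε} dz ≤ (1/c̲)(1 + D(d-1) ln(1/ε))`. -/
theorem stmt_12 (d : ℕ) (hd : 2 ≤ d) (c D α : ℝ) (hc : 0 < c) (hD : 0 < D)
    (hα0 : 0 < α) (hαd : α ≤ (d : ℝ)) (hdα : α = (d : ℝ) - 1)
    (𝒳 : Set (EuclideanSpace ℝ (Fin d))) (h𝒳 : MeasurableSet 𝒳)
    (μ : Measure (EuclideanSpace ℝ (Fin d))) [IsProbabilityMeasure μ]
    (hμ𝒳 : μ 𝒳 = 1)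
    (p : EuclideanSpace ℝ (Fin d) → ℝ) (hp_meas : Measurable p) (hp0 : ∀ x, 0 ≤ p x)
    (hμp : μ = volume.withDensity fun x => ENNReal.ofReal (p x))
    (hpc : ∀ᵐ x ∂volume, x ∈ 𝒳 → c ≤ p x)
    (g : EuclideanSpace ℝ (Fin d) → ℝ) (hg_meas : Measurable g) (hg0 : ∀ x, 0 ≤ g x)
    (hmargin : ∀ δ : ℝ, 0 < δ → μ {x | 0 < g x ∧ g x ≤ δ} ≤ ENNReal.ofReal (D * δ ^ α))
    (ε : ℝ) (hε0 : 0 < ε) (hε1 : ε < 1) :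
    ∫ z in 𝒳, Set.indicator {z | ε < g z} (fun z => g z ^ (-((d : ℝ) - 1))) z ≤
      1 / c * (1 + D * ((d : ℝ) - 1) * Real.log (1 / ε)) := by
  set β : ℝ := (d : ℝ) - 1 with hβdef
  have hd2 : (2 : ℝ) ≤ (d : ℝ) := by exact_mod_cast hd
  have hβ1 : 1 ≤ β := by simp only [hβdef]; linarith
  have hβ0 : 0 < β := by linarith
  have hαβ : α = β := hdα
  set h : EuclideanSpace ℝ (Fin d) → ℝ :=
    fun z => Set.indicator {z | ε < g z} (fun z => g z ^ (-β)) z with hhdef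
  have hset : MeasurableSet {z | ε < g z} := measurableSet_lt measurable_const hg_meas
  have hh_meas : Measurable h := (hg_meas.pow_const (-β)).indicator hset
  have hh0 : ∀ z, 0 ≤ h z :=
    fun z => Set.indicator_nonneg (fun z _ => Real.rpow_nonneg (hg0 z) _) z
  set X : ℝ := D * β * Real.log (1 / ε) with hXdef
  have hlogε : 0 < Real.log (1 / ε) := by
    rw [one_div]
    exact Real.log_pos ((one_lt_inv₀ hε0).2 hε1)
  have hX0 : 0 ≤ X := by positivity
  -- Step A : Bochner integral to lintegral
  have hA : ∫ z in 𝒳, h z ∂volume = (∫⁻ z in 𝒳, ENNReal.ofReal (h z) ∂volume).toReal :=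
    integral_eq_lintegral_of_nonneg_ae (Filter.Eventually.of_forall hh0)
      hh_meas.aestronglyMeasurable
  set Ivol : ℝ≥0∞ := ∫⁻ z in 𝒳, ENNReal.ofReal (h z) ∂volume with hIvol
  -- Step B : c * Ivol ≤ ∫⁻ over 𝒳 wrt μ
  have hB : ENNReal.ofReal c * Ivol ≤ ∫⁻ z in 𝒳, ENNReal.ofReal (h z) ∂μ := by
    rw [hμp, restrict_withDensity h𝒳,
      lintegral_withDensity_eq_lintegral_mul _ (hp_meas.ennreal_ofReal)
        (hh_meas.ennreal_ofReal)]
    rw [hIvol, ← lintegral_const_mul _ (hh_meas.ennreal_ofReal)]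
    refine lintegral_mono_ae ?_
    filter_upwards [(ae_restrict_iff' h𝒳).2 hpc] with z hz
    exact mul_le_mul_left (ENNReal.ofReal_le_ofReal hz) _
  -- Step C : extend to the whole space
  have hC : ∫⁻ z in 𝒳, ENNReal.ofReal (h z) ∂μ ≤ ∫⁻ z, ENNReal.ofReal (h z) ∂μ :=
    setLIntegral_le_lintegral _ _
  -- Step D : layer cake
  have hlayer : ∫⁻ z, ENNReal.ofReal (h z) ∂μ = ∫⁻ t in Set.Ioi (0:ℝ), μ {a | t < h a} :=
    lintegral_eq_lintegral_meas_lt μ (Filter.Eventually.of_forall hh0) hh_meas.aemeasurable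
  set M : ℝ := ε ^ (-β) with hMdef
  have hM1 : 1 < M := Real.one_lt_rpow_of_pos_of_lt_one_of_neg hε0 hε1 (by linarith)
  -- bound on (1, M]
  have hmid : ∀ t ∈ Set.Ioc (1:ℝ) M, μ {a | t < h a} ≤ ENNReal.ofReal (D / t) := by
    intro t ht
    have ht0 : 0 < t := lt_trans one_pos ht.1
    have hsub : {a | t < h a} ⊆ {x | 0 < g x ∧ g x ≤ t ^ (-β⁻¹)} := by
      intro a hat
      simp only [Set.mem_setOf_eq] at hat ⊢
      have hmem : a ∈ {z | ε < g z} := by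
        by_contra hmem
        rw [hhdef] at hat
        simp only [Set.indicator_of_notMem hmem] at hat
        exact absurd hat (not_lt.2 ht0.le)
      have hga : ε < g a := hmem
      have hval : h a = g a ^ (-β) := Set.indicator_of_mem hmem _
      have hga0 : 0 < g a := lt_trans hε0 hga
      refine ⟨hga0, ?_⟩
      have hlt : t < g a ^ (-β) := by rw [← hval]; exact hat
      have key : (g a ^ (-β)) ^ (-β⁻¹) < t ^ (-β⁻¹) :=
        Real.rpow_lt_rpow_of_neg ht0 hlt (neg_lt_zero.2 (by positivity))
      have heq : (g a ^ (-β)) ^ (-β⁻¹) = g a := by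
        rw [← Real.rpow_mul hga0.le]
        rw [show (-β) * (-β⁻¹) = β * β⁻¹ by ring, mul_inv_cancel₀ hβ0.ne', Real.rpow_one]
      rw [heq] at key
      exact key.le
    have hδ : (0:ℝ) < t ^ (-β⁻¹) := Real.rpow_pos_of_pos ht0 _
    calc μ {a | t < h a} ≤ μ {x | 0 < g x ∧ g x ≤ t ^ (-β⁻¹)} := measure_mono hsub
      _ ≤ ENNReal.ofReal (D * (t ^ (-β⁻¹)) ^ α) := hmargin _ hδ
      _ = ENNReal.ofReal (D / t) := by
          congr 1
          rw [hαβ, ← Real.rpow_mul ht0.le,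
            show (-β⁻¹) * β = -(β⁻¹ * β) by ring, inv_mul_cancel₀ hβ0.ne',
            Real.rpow_neg_one]
          rw [div_eq_mul_inv]
    -- end
  -- zero beyond M
  have htail : ∀ t ∈ Set.Ioi M, μ {a | t < h a} = 0 := by
    intro t ht
    have hM0 : 0 < M := lt_trans one_pos hM1
    convert measure_empty (μ := μ)
    ext a
    simp only [Set.mem_setOf_eq, Set.mem_empty_iff_false, iff_false, not_lt]
    by_cases hmem : a ∈ {z | ε < g z}
    · have hga : ε < g a := hmem
      have hval : h a = g a ^ (-β) := Set.indicator_of_mem hmem _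
      have : g a ^ (-β) ≤ ε ^ (-β) :=
        Real.rpow_le_rpow_of_nonpos hε0 hga.le (by linarith)
      calc h a = g a ^ (-β) := hval
        _ ≤ M := this
        _ ≤ t := le_of_lt ht
    · rw [hhdef]
      simp only [Set.indicator_of_notMem hmem]
      exact le_trans (le_of_lt hM0) (le_of_lt ht)
  -- split the outer integral
  have hsplit : ∫⁻ t in Set.Ioi (0:ℝ), μ {a | t < h a} ≤ 1 + ENNReal.ofReal X := by
    have hu1 : Set.Ioi (0:ℝ) = Set.Ioc 0 1 ∪ Set.Ioi 1 :=
      (Set.Ioc_union_Ioi_eq_Ioi zero_le_one).symm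
    have hu2 : Set.Ioi (1:ℝ) = Set.Ioc 1 M ∪ Set.Ioi M :=
      (Set.Ioc_union_Ioi_eq_Ioi hM1.le).symm
    rw [hu1, lintegral_union measurableSet_Ioi Set.Ioc_disjoint_Ioi_same,
      hu2, lintegral_union measurableSet_Ioi Set.Ioc_disjoint_Ioi_same]
    have hT1 : ∫⁻ t in Set.Ioc (0:ℝ) 1, μ {a | t < h a} ≤ 1 := by
      calc ∫⁻ t in Set.Ioc (0:ℝ) 1, μ {a | t < h a}
          ≤ ∫⁻ _ in Set.Ioc (0:ℝ) 1, 1 := lintegral_mono fun t => prob_le_one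
        _ = 1 := by simp [Real.volume_Ioc]
    have hT3 : ∫⁻ t in Set.Ioi M, μ {a | t < h a} = 0 := by
      rw [setLIntegral_congr_fun measurableSet_Ioi
        (fun t ht => htail t ht)]
      simp
    have hT2 : ∫⁻ t in Set.Ioc (1:ℝ) M, μ {a | t < h a} ≤ ENNReal.ofReal X := by
      have hmono : ∫⁻ t in Set.Ioc (1:ℝ) M, μ {a | t < h a}
          ≤ ∫⁻ t in Set.Ioc (1:ℝ) M, ENNReal.ofReal (D / t) :=
        setLIntegral_mono ((measurable_const.div measurable_id).ennreal_ofReal) hmid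
      have hint : IntegrableOn (fun t : ℝ => D / t) (Set.Ioc 1 M) := by
        apply (ContinuousOn.integrableOn_Icc ?_).mono_set Set.Ioc_subset_Icc_self
        exact continuousOn_const.div continuousOn_id
          (fun x hx => by rintro rfl; exact absurd hx.1 (by norm_num))
      have hcomp : ∫⁻ t in Set.Ioc (1:ℝ) M, ENNReal.ofReal (D / t)
          = ENNReal.ofReal (∫ t in Set.Ioc (1:ℝ) M, D / t) := by
        rw [← ofReal_integral_eq_lintegral_ofReal hint]
        filter_upwards [ae_restrict_mem measurableSet_Ioc] with t ht
        exact div_nonneg hD.le (le_trans zero_le_one ht.1.le)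
      have hval : ∫ t in Set.Ioc (1:ℝ) M, D / t = X := by
        rw [← intervalIntegral.integral_of_le hM1.le]
        have : ∫ t in (1:ℝ)..M, D / t = D * ∫ t in (1:ℝ)..M, 1 / t := by
          rw [← intervalIntegral.integral_const_mul]
          congr 1; ext t; ring
        rw [this, integral_one_div (by
          intro hmem
          rcases Set.mem_uIcc.1 hmem with ⟨h1, _⟩ | ⟨_, h2⟩
          · linarith
          · linarith [hM1])]
        rw [div_one, hMdef, Real.log_rpow hε0, hXdef, one_div, Real.log_inv]
        ring
      calc ∫⁻ t in Set.Ioc (1:ℝ) M, μ {a | t < h a}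
          ≤ ∫⁻ t in Set.Ioc (1:ℝ) M, ENNReal.ofReal (D / t) := hmono
        _ = ENNReal.ofReal X := by rw [hcomp, hval]
    calc (∫⁻ t in Set.Ioc (0:ℝ) 1, μ {a | t < h a})
          + ((∫⁻ t in Set.Ioc (1:ℝ) M, μ {a | t < h a})
            + ∫⁻ t in Set.Ioi M, μ {a | t < h a})
        ≤ 1 + (ENNReal.ofReal X + 0) := by
          exact add_le_add hT1 (add_le_add hT2 (le_of_eq hT3))
      _ = 1 + ENNReal.ofReal X := by rw [add_zero]
  -- Combine
  have hkey : ENNReal.ofReal c * Ivol ≤ ENNReal.ofReal (1 + X) := by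
    rw [ENNReal.ofReal_add zero_le_one hX0, ENNReal.ofReal_one]
    exact le_trans hB (le_trans hC (le_of_eq hlayer |>.trans hsplit))
  have hcne : ENNReal.ofReal c ≠ 0 := by
    simp [ENNReal.ofReal_eq_zero, not_le, hc]
  have hIle : Ivol ≤ ENNReal.ofReal (1 + X) / ENNReal.ofReal c := by
    rw [ENNReal.le_div_iff_mul_le (Or.inl hcne) (Or.inl ENNReal.ofReal_ne_top)]
    rw [mul_comm]
    exact hkey
  have hfin : ENNReal.ofReal (1 + X) / ENNReal.ofReal c ≠ ⊤ :=
    (ENNReal.div_lt_top ENNReal.ofReal_ne_top hcne).ne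
  have : (Ivol).toReal ≤ (1 + X) / c := by
    have := ENNReal.toReal_mono hfin hIle
    rwa [ENNReal.toReal_div, ENNReal.toReal_ofReal (by linarith),
      ENNReal.toReal_ofReal hc.le] at this
  rw [hA]
  calc Ivol.toReal ≤ (1 + X) / c := this
    _ = 1 / c * (1 + D * β * Real.log (1 / ε)) := by rw [hXdef]; ring
end

section
/- Assume in addition d ≥ 2 and α + 1 > d (i.e. d − 1 < α ≤ d). Then for every ε ∈ (0, 1): ∫_𝒳 g(z)^{−(d−1)}·1{g(z) > ε} dz ≤ (1/c̲)·(1 + D·(d−1)/(α+1−d)), where the integral is with respect to Lebesgue measure on ℝ^d. -/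
open MeasureTheory

/-- Case `α + 1 > d` (i.e. `d - 1 < α ≤ d`) of Lemma 8. Under the
density lower bound `p ≥ c̲` a.e. on `𝒳` (where `μ = p · Leb` is a probability measure
with `μ(𝒳) = 1`) and the margin condition `μ({0 < g ≤ δ}) ≤ D δ^α`, for every
`ε ∈ (0,1)`: `∫_𝒳 g(z)^{-(d-1)} 1{g(z) > ε} dz ≤ (1/c̲)(1 + D(d-1)/(α+1-d))`. -/
theorem stmt_13 (d : ℕ) (hd : 2 ≤ d) (c D α : ℝ) (hc : 0 < c) (hD : 0 < D)
    (hα0 : 0 < α) (hαd : α ≤ (d : ℝ)) (hdα : (d : ℝ) < α + 1)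
    (𝒳 : Set (EuclideanSpace ℝ (Fin d))) (h𝒳 : MeasurableSet 𝒳)
    (μ : Measure (EuclideanSpace ℝ (Fin d))) [IsProbabilityMeasure μ]
    (hμ𝒳 : μ 𝒳 = 1)
    (p : EuclideanSpace ℝ (Fin d) → ℝ) (hp_meas : Measurable p) (hp0 : ∀ x, 0 ≤ p x)
    (hμp : μ = volume.withDensity fun x => ENNReal.ofReal (p x))
    (hpc : ∀ᵐ x ∂volume, x ∈ 𝒳 → c ≤ p x)
    (g : EuclideanSpace ℝ (Fin d) → ℝ) (hg_meas : Measurable g) (hg0 : ∀ x, 0 ≤ g x)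
    (hmargin : ∀ δ : ℝ, 0 < δ → μ {x | 0 < g x ∧ g x ≤ δ} ≤ ENNReal.ofReal (D * δ ^ α))
    (ε : ℝ) (hε0 : 0 < ε) (hε1 : ε < 1) :
    ∫ z in 𝒳, Set.indicator {z | ε < g z} (fun z => g z ^ (-((d : ℝ) - 1))) z ≤
      1 / c * (1 + D * ((d : ℝ) - 1) / (α + 1 - (d : ℝ))) := by
  have hd2 : (2 : ℝ) ≤ (d : ℝ) := by exact_mod_cast hd
  set β : ℝ := (d : ℝ) - 1 with hβdef
  have hβ1 : (1 : ℝ) ≤ β := by simp only [hβdef]; linarith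
  have hβ0 : (0 : ℝ) < β := by linarith
  have hαβ : β < α := by simp only [hβdef]; linarith
  set f : EuclideanSpace ℝ (Fin d) → ℝ :=
    fun z => Set.indicator {z | ε < g z} (fun z => g z ^ (-β)) z with hfdef
  have hsm : MeasurableSet {z | ε < g z} := measurableSet_lt measurable_const hg_meas
  have hfmeas : Measurable f := (hg_meas.pow_const (-β)).indicator hsm
  have hf0 : ∀ z, 0 ≤ f z := fun z =>
    Set.indicator_nonneg (fun z _ => Real.rpow_nonneg (hg0 z) _) z
  set K : ℝ := 1 + D * β / (α - β) with hKdef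
  have hαβ0 : (0 : ℝ) < α - β := by linarith
  have hK0 : (0 : ℝ) < K := by
    have : 0 < D * β / (α - β) := by positivity
    simp only [hKdef]; linarith
  -- Step A: density lower bound
  have hA : ENNReal.ofReal c * ∫⁻ z in 𝒳, ENNReal.ofReal (f z) ∂volume ≤
      ∫⁻ z in 𝒳, ENNReal.ofReal (f z) ∂μ := by
    rw [hμp, MeasureTheory.restrict_withDensity h𝒳,
      lintegral_withDensity_eq_lintegral_mul _ hp_meas.ennreal_ofReal
        hfmeas.ennreal_ofReal, ← lintegral_const_mul _ hfmeas.ennreal_ofReal]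
    refine lintegral_mono_ae ?_
    filter_upwards [(ae_restrict_iff' h𝒳).2 hpc] with x hx
    simp only [Pi.mul_apply]
    exact mul_le_mul_left (ENNReal.ofReal_le_ofReal hx) _
  -- Step B: layer cake bound
  have hB : ∫⁻ z, ENNReal.ofReal (f z) ∂μ ≤ ENNReal.ofReal K := by
    rw [MeasureTheory.lintegral_eq_lintegral_meas_lt μ (Filter.Eventually.of_forall hf0)
      hfmeas.aemeasurable]
    have hsplit : Set.Ioc (0 : ℝ) 1 ∪ Set.Ioi 1 = Set.Ioi 0 :=
      Set.Ioc_union_Ioi_eq_Ioi zero_le_one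
    rw [← hsplit, lintegral_union measurableSet_Ioi Set.Ioc_disjoint_Ioi_same]
    have h1 : ∫⁻ t in Set.Ioc (0 : ℝ) 1, μ {a | t < f a} ≤ 1 := by
      calc ∫⁻ t in Set.Ioc (0 : ℝ) 1, μ {a | t < f a}
          ≤ ∫⁻ _ in Set.Ioc (0 : ℝ) 1, 1 := lintegral_mono fun t => prob_le_one
        _ = 1 := by simp [Real.volume_Ioc]
    have hr : -(α / β) < -1 := by
      have : 1 < α / β := (one_lt_div hβ0).2 hαβ
      linarith
    have h2 : ∫⁻ t in Set.Ioi (1 : ℝ), μ {a | t < f a} ≤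
        ENNReal.ofReal (D * β / (α - β)) := by
      have hptw : ∀ t ∈ Set.Ioi (1 : ℝ), μ {a | t < f a} ≤
          ENNReal.ofReal (D * t ^ (-(α / β))) := by
        intro t ht
        have ht1 : (1 : ℝ) < t := ht
        have ht0 : (0 : ℝ) < t := lt_trans one_pos ht1
        have hsub : {a | t < f a} ⊆ {x | 0 < g x ∧ g x ≤ t ^ (-(1 / β))} := by
          intro a ha
          simp only [Set.mem_setOf_eq] at ha ⊢
          by_cases hmem : a ∈ {z | ε < g z}
          · have hfa : f a = g a ^ (-β) := Set.indicator_of_mem hmem _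
            have hga : 0 < g a := lt_trans hε0 hmem
            refine ⟨hga, ?_⟩
            have h' : t < g a ^ (-β) := hfa ▸ ha
            have h'' : t ^ (1 / β) < (g a ^ (-β)) ^ (1 / β) :=
              Real.rpow_lt_rpow ht0.le h' (by positivity)
            have heq : (g a ^ (-β)) ^ (1 / β) = (g a)⁻¹ := by
              rw [← Real.rpow_mul hga.le]
              have : -β * (1 / β) = -1 := by field_simp
              rw [this, Real.rpow_neg_one]
            rw [heq] at h''
            have htp : 0 < t ^ (1 / β) := Real.rpow_pos_of_pos ht0 _
            have : g a < (t ^ (1 / β))⁻¹ := by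
              have := inv_strictAnti₀ htp h''
              rwa [inv_inv] at this
            rw [Real.rpow_neg ht0.le]
            exact this.le
          · exfalso
            have : f a = 0 := Set.indicator_of_notMem hmem _
            rw [this] at ha
            linarith
        have hδpos : 0 < t ^ (-(1 / β)) := Real.rpow_pos_of_pos ht0 _
        calc μ {a | t < f a} ≤ μ {x | 0 < g x ∧ g x ≤ t ^ (-(1 / β))} :=
            measure_mono hsub
          _ ≤ ENNReal.ofReal (D * (t ^ (-(1 / β))) ^ α) := hmargin _ hδpos
          _ = ENNReal.ofReal (D * t ^ (-(α / β))) := by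
              rw [← Real.rpow_mul ht0.le]
              congr 2
              field_simp
      have hInt : IntegrableOn (fun t : ℝ => D * t ^ (-(α / β))) (Set.Ioi 1) volume :=
        (integrableOn_Ioi_rpow_of_lt hr one_pos).const_mul D
      have hnn : 0 ≤ᵐ[volume.restrict (Set.Ioi (1 : ℝ))]
          fun t => D * t ^ (-(α / β)) := by
        refine (ae_restrict_iff' measurableSet_Ioi).2 ?_
        filter_upwards with t ht
        have ht0 : (0 : ℝ) < t := lt_trans one_pos ht
        positivity
      have hne : -(α / β) + 1 ≠ 0 := by
        have : 1 < α / β := (one_lt_div hβ0).2 hαβ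
        intro h; linarith
      have hint : ∫ t in Set.Ioi (1 : ℝ), D * t ^ (-(α / β)) = D * β / (α - β) := by
        rw [integral_const_mul, integral_Ioi_rpow_of_lt hr one_pos, Real.one_rpow]
        have hkey : (-1 : ℝ) / (-(α / β) + 1) = β / (α - β) := by
          rw [div_eq_div_iff hne hαβ0.ne']
          field_simp
          ring
        rw [hkey, mul_div_assoc]
      calc ∫⁻ t in Set.Ioi (1 : ℝ), μ {a | t < f a}
          ≤ ∫⁻ t in Set.Ioi (1 : ℝ), ENNReal.ofReal (D * t ^ (-(α / β))) :=
            setLIntegral_mono (measurable_const.mul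
              (measurable_id.pow_const (-(α / β)))).ennreal_ofReal hptw
        _ = ENNReal.ofReal (∫ t in Set.Ioi (1 : ℝ), D * t ^ (-(α / β))) :=
            (ofReal_integral_eq_lintegral_ofReal hInt hnn).symm
        _ = ENNReal.ofReal (D * β / (α - β)) := by rw [hint]
    calc (∫⁻ t in Set.Ioc (0 : ℝ) 1, μ {a | t < f a}) +
          ∫⁻ t in Set.Ioi (1 : ℝ), μ {a | t < f a}
        ≤ 1 + ENNReal.ofReal (D * β / (α - β)) := add_le_add h1 h2
      _ = ENNReal.ofReal K := by
          rw [hKdef, ENNReal.ofReal_add zero_le_one (by positivity), ENNReal.ofReal_one]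
  -- combine
  have hS : (∫⁻ z in 𝒳, ENNReal.ofReal (f z) ∂volume) ≤ ENNReal.ofReal (K / c) := by
    have hle : ENNReal.ofReal c * ∫⁻ z in 𝒳, ENNReal.ofReal (f z) ∂volume ≤
        ENNReal.ofReal K :=
      le_trans hA (le_trans (setLIntegral_le_lintegral _ _) hB)
    have hc' : ENNReal.ofReal c ≠ 0 := (ENNReal.ofReal_pos.2 hc).ne'
    rw [ENNReal.ofReal_div_of_pos hc]
    rw [ENNReal.le_div_iff_mul_le (Or.inl hc') (Or.inl ENNReal.ofReal_ne_top)]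
    rwa [mul_comm]
  have hiq : ∫ z in 𝒳, f z ∂volume =
      (∫⁻ z in 𝒳, ENNReal.ofReal (f z) ∂volume).toReal :=
    integral_eq_lintegral_of_nonneg_ae (Filter.Eventually.of_forall hf0)
      hfmeas.aestronglyMeasurable
  have hfinal : ∫ z in 𝒳, f z ∂volume ≤ K / c := by
    rw [hiq]
    exact ENNReal.toReal_le_of_le_ofReal (by positivity) hS
  have hrw : K / c = 1 / c * (1 + D * β / (α + 1 - (d : ℝ))) := by
    have : α + 1 - (d : ℝ) = α - β := by rw [hβdef]; ring
    rw [this, hKdef]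
    ring
  calc ∫ z in 𝒳, f z ∂volume ≤ K / c := hfinal
    _ = 1 / c * (1 + D * β / (α + 1 - (d : ℝ))) := hrw
end

section
/- For every ε > 0: ∫_𝒳 g(z)^{−(d+1)}·1{g(z) > ε} dz ≤ (D·(d+1)/(c̲·(d+1−α)))·ε^{α−d−1}, where the integral is with respect to Lebesgue measure on ℝ^d. -/
open MeasureTheory

/-- Exponent-`(d+1)` analogue of the dominating case of Lemma 8.
Under the density lower bound `p ≥ c̲` a.e. on `𝒳` (where `μ = p · Leb` is a probability
measure with `μ(𝒳) = 1`) and the margin condition `μ({0 < g ≤ δ}) ≤ D δ^α`, for every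
`ε > 0`: `∫_𝒳 g(z)^{-(d+1)} 1{g(z) > ε} dz ≤ (D(d+1)/(c̲(d+1-α))) ε^{α-d-1}`. -/
theorem stmt_14 (d : ℕ) (hd : 1 ≤ d) (c D α : ℝ) (hc : 0 < c) (hD : 0 < D)
    (hα0 : 0 < α) (hαd : α ≤ (d : ℝ))
    (𝒳 : Set (EuclideanSpace ℝ (Fin d))) (h𝒳 : MeasurableSet 𝒳)
    (μ : Measure (EuclideanSpace ℝ (Fin d))) [IsProbabilityMeasure μ]
    (hμ𝒳 : μ 𝒳 = 1)
    (p : EuclideanSpace ℝ (Fin d) → ℝ) (hp_meas : Measurable p) (hp0 : ∀ x, 0 ≤ p x)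
    (hμp : μ = volume.withDensity fun x => ENNReal.ofReal (p x))
    (hpc : ∀ᵐ x ∂volume, x ∈ 𝒳 → c ≤ p x)
    (g : EuclideanSpace ℝ (Fin d) → ℝ) (hg_meas : Measurable g) (hg0 : ∀ x, 0 ≤ g x)
    (hmargin : ∀ δ : ℝ, 0 < δ → μ {x | 0 < g x ∧ g x ≤ δ} ≤ ENNReal.ofReal (D * δ ^ α))
    (ε : ℝ) (hε0 : 0 < ε) :
    ∫ z in 𝒳, Set.indicator {z | ε < g z} (fun z => g z ^ (-((d : ℝ) + 1))) z ≤
      D * ((d : ℝ) + 1) / (c * ((d : ℝ) + 1 - α)) * ε ^ (α - (d : ℝ) - 1) := by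
  set n : ℝ := (d : ℝ) + 1 with hn_def
  have hn0 : (0:ℝ) < n := by positivity
  have hαn : α < n := lt_of_le_of_lt hαd (by simp [hn_def])
  set β : ℝ := α / n with hβ_def
  have hβ0 : 0 < β := div_pos hα0 hn0
  have hβ1 : β < 1 := (div_lt_one hn0).2 hαn
  set T : ℝ := ε ^ (-n) with hT_def
  have hT0 : 0 < T := Real.rpow_pos_of_pos hε0 _
  set F : EuclideanSpace ℝ (Fin d) → ℝ :=
    fun z => Set.indicator {z | ε < g z} (fun z => g z ^ (-n)) z with hF_def
  have hF_meas : Measurable F :=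
    Measurable.indicator (by fun_prop) (measurableSet_lt measurable_const hg_meas)
  have hF_nn : ∀ z, 0 ≤ F z := fun z =>
    Set.indicator_nonneg (fun z _ => Real.rpow_nonneg (hg0 z) _) z
  -- Step 1: express Bochner integral via lintegral
  have step1 : ∫ z in 𝒳, F z =
      (∫⁻ z in 𝒳, ENNReal.ofReal (F z)).toReal :=
    integral_eq_lintegral_of_nonneg_ae (Filter.Eventually.of_forall hF_nn)
      hF_meas.aestronglyMeasurable
  -- Step 2: compare lintegral over volume to lintegral over μ
  have step2 : ENNReal.ofReal c * ∫⁻ z in 𝒳, ENNReal.ofReal (F z) ≤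
      ∫⁻ z, ENNReal.ofReal (F z) ∂μ := by
    have hμint : ∫⁻ z, ENNReal.ofReal (F z) ∂μ =
        ∫⁻ z, ENNReal.ofReal (p z) * ENNReal.ofReal (F z) := by
      rw [hμp, lintegral_withDensity_eq_lintegral_mul _ hp_meas.ennreal_ofReal
        hF_meas.ennreal_ofReal]
      rfl
    rw [hμint, ← lintegral_const_mul _ hF_meas.ennreal_ofReal]
    calc ∫⁻ z in 𝒳, ENNReal.ofReal c * ENNReal.ofReal (F z)
        ≤ ∫⁻ z in 𝒳, ENNReal.ofReal (p z) * ENNReal.ofReal (F z) := by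
          refine lintegral_mono_ae ?_
          filter_upwards [(ae_restrict_iff' h𝒳).2 hpc] with z hz
          exact mul_le_mul_left (ENNReal.ofReal_le_ofReal hz) _
      _ ≤ ∫⁻ z, ENNReal.ofReal (p z) * ENNReal.ofReal (F z) :=
          setLIntegral_le_lintegral _ _
  -- Step 3: layer cake
  have layer : ∫⁻ z, ENNReal.ofReal (F z) ∂μ =
      ∫⁻ t in Set.Ioi (0:ℝ), μ {a | t < F a} :=
    lintegral_eq_lintegral_meas_lt μ (Filter.Eventually.of_forall hF_nn)
      hF_meas.aemeasurable
  -- Step 4: bound the level-set measures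
  have level_bound : ∀ t ∈ Set.Ioi (0:ℝ), μ {a | t < F a} ≤
      Set.indicator (Set.Ioc 0 T) (fun t => ENNReal.ofReal (D * t ^ (-β))) t := by
    intro t ht
    simp only [Set.mem_Ioi] at ht
    by_cases htT : t ≤ T
    · rw [Set.indicator_of_mem (Set.mem_Ioc.2 ⟨ht, htT⟩)]
      have hsub : {a | t < F a} ⊆ {x | 0 < g x ∧ g x ≤ t ^ (-(1/n))} := by
        intro a ha
        simp only [Set.mem_setOf_eq] at ha ⊢
        have hmem : a ∈ {z | ε < g z} := by
          by_contra hcon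
          rw [hF_def] at ha
          simp only [Set.indicator_of_notMem hcon] at ha
          exact absurd ha (not_lt.2 ht.le)
        have hgε : ε < g a := hmem
        have hga : 0 < g a := lt_trans hε0 hgε
        refine ⟨hga, ?_⟩
        have hFa : F a = g a ^ (-n) := Set.indicator_of_mem hmem _
        rw [hFa] at ha
        have hz : -(1/n) < 0 := by
          have : (0:ℝ) < 1/n := by positivity
          linarith
        have h1 : (g a ^ (-n)) ^ (-(1/n)) ≤ t ^ (-(1/n)) :=
          (Real.rpow_le_rpow_iff_of_neg (Real.rpow_pos_of_pos hga _) ht hz).2 ha.le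
        have h2 : (g a ^ (-n)) ^ (-(1/n)) = g a := by
          rw [← Real.rpow_mul hga.le]
          have : -n * -(1/n) = 1 := by field_simp
          rw [this, Real.rpow_one]
        rw [h2] at h1
        exact h1
      calc μ {a | t < F a} ≤ μ {x | 0 < g x ∧ g x ≤ t ^ (-(1/n))} := measure_mono hsub
        _ ≤ ENNReal.ofReal (D * (t ^ (-(1/n))) ^ α) :=
            hmargin _ (Real.rpow_pos_of_pos ht _)
        _ = ENNReal.ofReal (D * t ^ (-β)) := by
            rw [← Real.rpow_mul ht.le]
            congr 2
            rw [hβ_def]; field_simp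
    · rw [Set.indicator_of_notMem (by simp [Set.mem_Ioc, htT])]
      have : {a | t < F a} = ∅ := by
        ext a
        simp only [Set.mem_setOf_eq, Set.mem_empty_iff_false, iff_false, not_lt]
        by_cases hmem : a ∈ {z | ε < g z}
        · have hgε : ε < g a := hmem
          have hFa : F a = g a ^ (-n) := Set.indicator_of_mem hmem _
          rw [hFa]
          have hlt : g a ^ (-n) < ε ^ (-n) :=
            Real.rpow_lt_rpow_of_neg hε0 hgε (by linarith)
          calc g a ^ (-n) ≤ T := hlt.le
            _ ≤ t := le_of_not_ge htT
        · have : F a = 0 := Set.indicator_of_notMem hmem _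
          rw [this]; exact ht.le
      rw [this, measure_empty]
  -- Step 5: integrate the bound
  have hint : IntegrableOn (fun t : ℝ => D * t ^ (-β)) (Set.Ioc 0 T) := by
    have h1 : IntervalIntegrable (fun t : ℝ => t ^ (-β)) volume 0 T :=
      intervalIntegral.intervalIntegrable_rpow' (by linarith)
    have h2 := (h1.const_mul D)
    rw [intervalIntegrable_iff_integrableOn_Ioc_of_le hT0.le] at h2
    exact h2
  have step5 : ∫⁻ t in Set.Ioi (0:ℝ), μ {a | t < F a} ≤
      ENNReal.ofReal (D * (T ^ (1 - β) / (1 - β))) := by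
    calc ∫⁻ t in Set.Ioi (0:ℝ), μ {a | t < F a}
        ≤ ∫⁻ t in Set.Ioi (0:ℝ),
            Set.indicator (Set.Ioc 0 T) (fun t => ENNReal.ofReal (D * t ^ (-β))) t :=
          setLIntegral_mono (Measurable.indicator
            (by fun_prop) measurableSet_Ioc) level_bound
      _ = ∫⁻ t in Set.Ioc (0:ℝ) T, ENNReal.ofReal (D * t ^ (-β)) := by
          rw [lintegral_indicator measurableSet_Ioc,
            Measure.restrict_restrict measurableSet_Ioc,
            Set.inter_eq_left.2 Set.Ioc_subset_Ioi_self]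
      _ = ENNReal.ofReal (∫ t in Set.Ioc (0:ℝ) T, D * t ^ (-β)) :=
          (ofReal_integral_eq_lintegral_ofReal hint
            ((ae_restrict_iff' measurableSet_Ioc).2 (Filter.Eventually.of_forall
              fun t ht => by have h0 : 0 < t := ht.1; positivity))).symm
      _ = ENNReal.ofReal (D * (T ^ (1 - β) / (1 - β))) := by
          congr 1
          rw [← intervalIntegral.integral_of_le hT0.le,
            intervalIntegral.integral_const_mul,
            integral_rpow (Or.inl (by linarith : (-1:ℝ) < -β))]
          rw [Real.zero_rpow (by linarith : -β + 1 ≠ 0)]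
          ring_nf
  -- Combine everything
  rw [step1]
  have hM0 : (0:ℝ) ≤ D * (T ^ (1 - β) / (1 - β)) := by
    have : (0:ℝ) < 1 - β := by linarith
    positivity
  have hA : ∫⁻ z in 𝒳, ENNReal.ofReal (F z) ≤
      ENNReal.ofReal (c⁻¹ * (D * (T ^ (1 - β) / (1 - β)))) := by
    have key : ENNReal.ofReal c * ∫⁻ z in 𝒳, ENNReal.ofReal (F z) ≤
        ENNReal.ofReal (D * (T ^ (1 - β) / (1 - β))) :=
      step2.trans (layer.le.trans step5)
    have hc' : ENNReal.ofReal c ≠ 0 := by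
      simp [ENNReal.ofReal_eq_zero, not_le, hc]
    calc ∫⁻ z in 𝒳, ENNReal.ofReal (F z)
        = (ENNReal.ofReal c)⁻¹ * (ENNReal.ofReal c * ∫⁻ z in 𝒳, ENNReal.ofReal (F z)) := by
          rw [← mul_assoc, ENNReal.inv_mul_cancel hc' ENNReal.ofReal_ne_top, one_mul]
      _ ≤ (ENNReal.ofReal c)⁻¹ * ENNReal.ofReal (D * (T ^ (1 - β) / (1 - β))) :=
          mul_le_mul_right key _
      _ = ENNReal.ofReal (c⁻¹ * (D * (T ^ (1 - β) / (1 - β)))) := by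
          rw [← ENNReal.ofReal_inv_of_pos hc, ← ENNReal.ofReal_mul (by positivity)]
  have hle : (∫⁻ z in 𝒳, ENNReal.ofReal (F z)).toReal ≤
      c⁻¹ * (D * (T ^ (1 - β) / (1 - β))) :=
    ENNReal.toReal_le_of_le_ofReal (by positivity) hA
  refine hle.trans (le_of_eq ?_)
  have hTpow : T ^ (1 - β) = ε ^ (α - n) := by
    rw [hT_def, ← Real.rpow_mul hε0.le]
    congr 1
    rw [hβ_def]
    field_simp
    ring
  have hexp : α - (d:ℝ) - 1 = α - n := by rw [hn_def]; ring
  rw [hTpow, hexp]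
  have h1β : 1 - β = (n - α) / n := by rw [hβ_def]; field_simp
  rw [h1β]
  have hnα : n - α ≠ 0 := by linarith
  field_simp
end
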